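/- Let A be a C*-algebra and D ⊆ A an abelian closed *-subalgebra containing an approximate unit for A, and let n be a normaliser of D in A. Then there is a unique homeomorphism α_n : supp°(n*n) → supp°(nn*) such that φ(n*n)·(α_n(φ))(d) = φ(n* d n) for all φ ∈ supp°(n*n) and all d ∈ D. -/

import Mathlib

open WeakDual Filter Topology Classical

variable {A : Type} [NonUnitalNormedRing A] [StarRing A] [CStarRing A]
  [NormedSpace ℂ A] [IsScalarTower ℂ A A] [SMulCommClass ℂ A A] [CompleteSpace A] [StarModule ℂ A]

/-- Evaluation of a character of `D` at an element of `A` (taken to be `0` off `D`). -/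
noncomputable def evalD (D : NonUnitalStarSubalgebra ℂ A) (φ : characterSpace ℂ D) (a : A) : ℂ :=
  if h : a ∈ D then φ (⟨a, h⟩ : D) else 0

/-- The open support `supp°(a) = {φ ∈ D̂ : φ(a) ≠ 0}`. -/
def suppo (D : NonUnitalStarSubalgebra ℂ A) (a : A) : Set (characterSpace ℂ D) :=
  {φ | evalD D φ a ≠ 0}

/-- `n` is a normaliser of `D` in `A`. -/
def IsNormalizer (D : NonUnitalStarSubalgebra ℂ A) (n : A) : Prop :=
  ∀ d ∈ D, n * d * star n ∈ D ∧ star n * d * n ∈ D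

/-- `S` contains an approximate unit for `A`: there is a net in `S` converging
multiplicatively to the identity on every element of `A`. -/
def HasApproxUnit (S : Set A) : Prop :=
  ∃ (ι : Type) (l : Filter ι) (e : ι → A), l.NeBot ∧ (∀ i, e i ∈ S) ∧
    ∀ a : A, Tendsto (fun i => e i * a) l (nhds a) ∧ Tendsto (fun i => a * e i) l (nhds a)

/-- `α` is "the" homeomorphism `α_n : supp°(n*n) → supp°(nn*)` attached to a normaliser `n`,
i.e. a partial homeomorphism of `D̂` with source `supp°(n*n)`, target `supp°(nn*)`, and
satisfying `φ(n*n)·(α_n φ)(d) = φ(n* d n)` for all `φ` in the source and `d ∈ D`. -/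
def IsWeylHomeo (D : NonUnitalStarSubalgebra ℂ A) (n : A)
    (α : PartialHomeomorph (characterSpace ℂ D) (characterSpace ℂ D)) : Prop :=
  α.source = suppo D (star n * n) ∧ α.target = suppo D (n * star n) ∧
  ∀ φ ∈ α.source, ∀ d ∈ D, evalD D φ (star n * n) * evalD D (α φ) d = evalD D φ (star n * d * n)

/-- The relative commutant `D' = {a ∈ A : a d = d a for all d ∈ D}`, as a set. -/
def commutantSet (D : NonUnitalStarSubalgebra ℂ A) : Set A := {a | ∀ d ∈ D, a * d = d * a}

/-- The ideal `J_φ ⊆ D'`: the closure of `(ker φ)·D'`. -/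
noncomputable def Jset (D : NonUnitalStarSubalgebra ℂ A) (φ : characterSpace ℂ D) : Set A :=
  closure ((Submodule.span ℂ {x : A | ∃ k ∈ (D : Set A), ∃ a ∈ commutantSet D,
    evalD D φ k = 0 ∧ x = k * a} : Submodule ℂ A) : Set A)

/-- `e ∈ D'` represents the unit of `D'/J_φ`. -/
def IsUnitModJ (D : NonUnitalStarSubalgebra ℂ A) (φ : characterSpace ℂ D) (e : A) : Prop :=
  e ∈ commutantSet D ∧ ∀ a ∈ commutantSet D, e * a - a ∈ Jset D φ ∧ a * e - a ∈ Jset D φ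

/-- `D` is a weakly Cartan subalgebra of `A`. -/
def IsWeaklyCartan (D : NonUnitalStarSubalgebra ℂ A) : Prop :=
  IsClosed (D : Set A) ∧ (∀ x ∈ D, ∀ y ∈ D, x * y = y * x) ∧ HasApproxUnit (D : Set A) ∧
  (∀ φ : characterSpace ℂ D, ∃ e, IsUnitModJ D φ e) ∧
  (∀ φ : characterSpace ℂ D, ∃ d ∈ D, ∃ U : Set (characterSpace ℂ D),
    IsOpen U ∧ φ ∈ U ∧ ∀ ψ ∈ U, IsUnitModJ D ψ d)

/-- The relative commutant `D'` as a non-unital star subalgebra of `A`. -/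
def commutantAlg (D : NonUnitalStarSubalgebra ℂ A) : NonUnitalStarSubalgebra ℂ A where
  carrier := commutantSet D
  add_mem' := by
    intro a b ha hb d hd
    simp only [commutantSet, Set.mem_setOf_eq] at *
    rw [add_mul, mul_add, ha d hd, hb d hd]
  zero_mem' := by
    intro d _
    rw [zero_mul, mul_zero]
  mul_mem' := by
    intro a b ha hb d hd
    calc a * b * d = a * (b * d) := by rw [mul_assoc]
      _ = a * (d * b) := by rw [hb d hd]
      _ = a * d * b := by rw [mul_assoc]
      _ = d * a * b := by rw [ha d hd]
      _ = d * (a * b) := by rw [mul_assoc]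
  smul_mem' := by
    intro c a ha d hd
    rw [smul_mul_assoc, ha d hd, mul_smul_comm]
  star_mem' := by
    intro a ha d hd
    calc star a * d = star (star d * a) := by rw [star_mul, star_star]
      _ = star (a * star d) := by rw [← ha (star d) (star_mem hd)]
      _ = d * star a := by rw [star_mul, star_star]

/-- `w` is a representative in `A` of the unitary `U^φ_{n*m}` of `D'/J_φ`:
`w = φ(m*m)^{-1/2}·φ(n*n)^{-1/2}·(d n* m d)` for some admissible `U` and `d`. -/
noncomputable def WeylRep (D : NonUnitalStarSubalgebra ℂ A) (n m : A)
    (φ : characterSpace ℂ D) (w : A) : Prop :=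
  ∃ U : Set (characterSpace ℂ D), IsOpen U ∧ φ ∈ U ∧
    U ⊆ suppo D (star n * n) ∩ suppo D (star m * m) ∧
    (∃ αn αm : PartialHomeomorph (characterSpace ℂ D) (characterSpace ℂ D),
       IsWeylHomeo D n αn ∧ IsWeylHomeo D m αm ∧ Set.EqOn ⇑αn ⇑αm U) ∧
    ∃ d ∈ (D : Set A), suppo D d ⊆ U ∧ evalD D φ d = 1 ∧
      w = (evalD D φ (star m * m) ^ (-(1/2) : ℂ) * evalD D φ (star n * n) ^ (-(1/2) : ℂ)) •
        (d * (star n * m) * d)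

/-- The unitary `U^φ_{n*m}` of `D'/J_φ` lies in the connected component of the identity of
the unitary group of `D'/J_φ`; the quotient `D'/J_φ` is represented by an arbitrary
surjective star-homomorphism `π` from `D'` onto a unital C*-algebra `Q` with kernel `J_φ`. -/
noncomputable def InU0 (D : NonUnitalStarSubalgebra ℂ A) (n m : A)
    (φ : characterSpace ℂ D) : Prop :=
  ∀ (Q : Type) [NormedRing Q] [StarRing Q] [CStarRing Q] [NormedAlgebra ℂ Q]
    [CompleteSpace Q] [StarModule ℂ Q] (π : commutantAlg D →⋆ₙₐ[ℂ] Q),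
    Function.Surjective ⇑π →
    (∀ a : commutantAlg D, π a = 0 ↔ (a : A) ∈ Jset D φ) →
    ∃ w : commutantAlg D, WeylRep D n m φ (w : A) ∧
      ∃ hu : π w ∈ unitary Q, (⟨π w, hu⟩ : unitary Q) ∈ connectedComponent (1 : unitary Q)

/-- The relation `(n, φ) ∼ (m, ψ)` of Lemma 4.7 (for the trivial coaction). -/
noncomputable def WeylSimRaw (D : NonUnitalStarSubalgebra ℂ A) (n : A)
    (φ : characterSpace ℂ D) (m : A) (ψ : characterSpace ℂ D) : Prop :=
  φ = ψ ∧
  (∃ U : Set (characterSpace ℂ D), IsOpen U ∧ φ ∈ U ∧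
    U ⊆ suppo D (star n * n) ∩ suppo D (star m * m) ∧
    ∃ αn αm : PartialHomeomorph (characterSpace ℂ D) (characterSpace ℂ D),
      IsWeylHomeo D n αn ∧ IsWeylHomeo D m αm ∧ Set.EqOn ⇑αn ⇑αm U) ∧
  InU0 D n m φ

/-- The set of pairs `(n, φ)` with `n ∈ N(D)` and `φ ∈ supp°(n*n)`. -/
def WeylPair (D : NonUnitalStarSubalgebra ℂ A) : Type :=
  {p : A × characterSpace ℂ D // IsNormalizer D p.1 ∧ p.2 ∈ suppo D (star p.1 * p.1)}


namespace WeylAux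

variable (D : NonUnitalStarSubalgebra ℂ A)

theorem evalD_of_mem {φ : characterSpace ℂ D} {a : A} (h : a ∈ D) :
    evalD D φ a = φ (⟨a, h⟩ : D) := dif_pos h

theorem mem_suppo_iff {φ : characterSpace ℂ D} {a : A} (h : a ∈ D) :
    φ ∈ suppo D a ↔ φ (⟨a, h⟩ : D) ≠ 0 := by
  unfold suppo
  rw [Set.mem_setOf_eq, evalD_of_mem D h]

theorem suppo_isOpen {a : A} (h : a ∈ D) : IsOpen (suppo D a) := by
  have hEq : suppo D a = (fun φ : characterSpace ℂ D => φ (⟨a, h⟩ : D)) ⁻¹' {0}ᶜ := by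
    ext φ
    simp [mem_suppo_iff D h]
  rw [hEq]
  exact isOpen_compl_singleton.preimage
    ((WeakDual.eval_continuous _).comp continuous_subtype_val)

theorem mul_mem_of_approx (hDclosed : IsClosed (D : Set A))
    (hDapprox : HasApproxUnit (D : Set A)) {u v : A}
    (hc : ∀ d ∈ D, u * d * v ∈ D) : u * v ∈ D := by
  obtain ⟨ι, l, e, hne, heD, hconv⟩ := hDapprox
  haveI := hne
  have h1 : Tendsto (fun i => u * (e i * v)) l (nhds (u * v)) :=
    ((hconv v).1).const_mul u
  exact hDclosed.mem_of_tendsto h1 (Eventually.of_forall fun i => by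
    have := hc (e i) (heD i)
    rwa [mul_assoc] at this)

variable (u v : A)

/-- The conjugation map `d ↦ u d v` as a continuous linear map `D →L[ℂ] D`. -/
noncomputable def wT (hc : ∀ d ∈ D, u * d * v ∈ D) : D →L[ℂ] D :=
  LinearMap.mkContinuous
    { toFun := fun d => ⟨u * (d : A) * v, hc _ d.2⟩
      map_add' := fun x y => Subtype.ext (by simp [mul_add, add_mul])
      map_smul' := fun c x => Subtype.ext (by simp [mul_smul_comm, smul_mul_assoc]) }
    (‖u‖ * ‖v‖)
    (fun d => by
      calc ‖u * (d : A) * v‖ ≤ ‖u * (d : A)‖ * ‖v‖ := norm_mul_le _ _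
        _ ≤ ‖u‖ * ‖(d : A)‖ * ‖v‖ := by
            gcongr
            exact norm_mul_le _ _
        _ = ‖u‖ * ‖v‖ * ‖(d : A)‖ := by ring)

theorem wT_apply (hc : ∀ d ∈ D, u * d * v ∈ D) (d : D) :
    wT D u v hc d = ⟨u * (d : A) * v, hc _ d.2⟩ := rfl

noncomputable def wFun (hc : ∀ d ∈ D, u * d * v ∈ D) (huv : u * v ∈ D)
    (φ : characterSpace ℂ D) : WeakDual ℂ D :=
  (φ (⟨u * v, huv⟩ : D))⁻¹ • ((CharacterSpace.toCLM φ).comp (wT D u v hc))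

theorem wFun_apply (hc : ∀ d ∈ D, u * d * v ∈ D) (huv : u * v ∈ D)
    (φ : characterSpace ℂ D) (d : D) :
    wFun D u v hc huv φ d
      = (φ (⟨u * v, huv⟩ : D))⁻¹ * φ (⟨u * (d : A) * v, hc _ d.2⟩ : D) := rfl

theorem wT_mul (hab : ∀ x ∈ D, ∀ y ∈ D, x * y = y * x)
    (hc : ∀ d ∈ D, u * d * v ∈ D) (huv : u * v ∈ D) (hvu : v * u ∈ D) (x y : D) :
    (⟨u * v, huv⟩ : D) * wT D u v hc (x * y) = wT D u v hc x * wT D u v hc y := by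
  apply Subtype.ext
  have hx : (x : A) * (v * u) = (v * u) * (x : A) := hab (x : A) x.2 (v * u) hvu
  have h2 : ∀ z : A, (x : A) * (v * (u * z)) = v * (u * ((x : A) * z)) := by
    intro z
    calc (x : A) * (v * (u * z)) = ((x : A) * (v * u)) * z := by simp [mul_assoc]
      _ = ((v * u) * (x : A)) * z := by rw [hx]
      _ = v * (u * ((x : A) * z)) := by simp [mul_assoc]
  show (u * v) * (u * ((x : A) * (y : A)) * v) = (u * (x : A) * v) * (u * (y : A) * v)
  simp only [mul_assoc]
  rw [h2 ((y : A) * v)]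

theorem wFun_mul (hab : ∀ x ∈ D, ∀ y ∈ D, x * y = y * x)
    (hc : ∀ d ∈ D, u * d * v ∈ D) (huv : u * v ∈ D) (hvu : v * u ∈ D)
    (φ : characterSpace ℂ D) (hφ : φ (⟨u * v, huv⟩ : D) ≠ 0) (x y : D) :
    wFun D u v hc huv φ (x * y) = wFun D u v hc huv φ x * wFun D u v hc huv φ y := by
  have key : φ (⟨u * v, huv⟩ : D) * φ (wT D u v hc (x * y))
      = φ (wT D u v hc x) * φ (wT D u v hc y) := by
    have h0 := congrArg φ (wT_mul D u v hab hc huv hvu x y)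
    rwa [map_mul φ (⟨u * v, huv⟩ : D) (wT D u v hc (x * y)),
      map_mul φ (wT D u v hc x) (wT D u v hc y)] at h0
  rw [wFun_apply, wFun_apply, wFun_apply]
  have hTxy : (⟨u * ((x * y : D) : A) * v, hc _ (x * y).2⟩ : D) = wT D u v hc (x * y) := rfl
  have hTx : (⟨u * (x : A) * v, hc _ x.2⟩ : D) = wT D u v hc x := rfl
  have hTy : (⟨u * (y : A) * v, hc _ y.2⟩ : D) = wT D u v hc y := rfl
  rw [hTxy, hTx, hTy]
  field_simp
  linear_combination key

theorem wFun_vu (hc : ∀ d ∈ D, u * d * v ∈ D) (huv : u * v ∈ D) (hvu : v * u ∈ D)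
    (φ : characterSpace ℂ D) :
    wFun D u v hc huv φ (⟨v * u, hvu⟩ : D) = φ (⟨u * v, huv⟩ : D) := by
  have h1 : (⟨u * (v * u) * v, hc _ hvu⟩ : D) = ⟨u * v, huv⟩ * ⟨u * v, huv⟩ :=
    Subtype.ext (by simp [mul_assoc])
  rw [wFun_apply, h1, map_mul]
  rcases eq_or_ne (φ (⟨u * v, huv⟩ : D)) 0 with h | h
  · simp [h]
  · field_simp

theorem wFun_ne (hc : ∀ d ∈ D, u * d * v ∈ D) (huv : u * v ∈ D) (hvu : v * u ∈ D)
    (φ : characterSpace ℂ D) (hφ : φ (⟨u * v, huv⟩ : D) ≠ 0) :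
    wFun D u v hc huv φ ≠ 0 := by
  intro h0
  have := wFun_vu D u v hc huv hvu φ
  rw [h0] at this
  exact hφ (this.symm.trans rfl)

noncomputable def wChar (hab : ∀ x ∈ D, ∀ y ∈ D, x * y = y * x)
    (hc : ∀ d ∈ D, u * d * v ∈ D) (huv : u * v ∈ D) (hvu : v * u ∈ D) :
    characterSpace ℂ D → characterSpace ℂ D := fun φ =>
  if hφ : φ (⟨u * v, huv⟩ : D) ≠ 0 then
    ⟨wFun D u v hc huv φ,
      ⟨wFun_ne D u v hc huv hvu φ hφ, fun x y => wFun_mul D u v hab hc huv hvu φ hφ x y⟩⟩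
  else φ

theorem wChar_apply (hab : ∀ x ∈ D, ∀ y ∈ D, x * y = y * x)
    (hc : ∀ d ∈ D, u * d * v ∈ D) (huv : u * v ∈ D) (hvu : v * u ∈ D)
    (φ : characterSpace ℂ D) (hφ : φ (⟨u * v, huv⟩ : D) ≠ 0) (d : D) :
    (wChar D u v hab hc huv hvu φ) d
      = (φ (⟨u * v, huv⟩ : D))⁻¹ * φ (⟨u * (d : A) * v, hc _ d.2⟩ : D) := by
  simp only [wChar, dif_pos hφ]
  exact wFun_apply D u v hc huv φ d

theorem wChar_vu (hab : ∀ x ∈ D, ∀ y ∈ D, x * y = y * x)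
    (hc : ∀ d ∈ D, u * d * v ∈ D) (huv : u * v ∈ D) (hvu : v * u ∈ D)
    (φ : characterSpace ℂ D) (hφ : φ (⟨u * v, huv⟩ : D) ≠ 0) :
    (wChar D u v hab hc huv hvu φ) (⟨v * u, hvu⟩ : D) = φ (⟨u * v, huv⟩ : D) := by
  simp only [wChar, dif_pos hφ]
  exact wFun_vu D u v hc huv hvu φ

theorem wChar_inv (hab : ∀ x ∈ D, ∀ y ∈ D, x * y = y * x)
    (hc : ∀ d ∈ D, u * d * v ∈ D) (hc' : ∀ d ∈ D, v * d * u ∈ D)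
    (huv : u * v ∈ D) (hvu : v * u ∈ D)
    (φ : characterSpace ℂ D) (hφ : φ (⟨u * v, huv⟩ : D) ≠ 0) :
    wChar D v u hab hc' hvu huv (wChar D u v hab hc huv hvu φ) = φ := by
  set c := φ (⟨u * v, huv⟩ : D) with hc_def
  set ψ := wChar D u v hab hc huv hvu φ with hψ_def
  have hψ : ψ (⟨v * u, hvu⟩ : D) = c := wChar_vu D u v hab hc huv hvu φ hφ
  have hψne : ψ (⟨v * u, hvu⟩ : D) ≠ 0 := by rw [hψ]; exact hφ
  apply CharacterSpace.ext
  intro d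
  rw [wChar_apply D v u hab hc' hvu huv ψ hψne d]
  have h3 : ψ (⟨v * (d : A) * u, hc' _ d.2⟩ : D)
      = c⁻¹ * φ (⟨u * (v * (d : A) * u) * v, hc _ (hc' _ d.2)⟩ : D) :=
    wChar_apply D u v hab hc huv hvu φ hφ ⟨v * (d : A) * u, hc' _ d.2⟩
  have h2 : (⟨u * (v * (d : A) * u) * v, hc _ (hc' _ d.2)⟩ : D)
      = ⟨u * v, huv⟩ * d * ⟨u * v, huv⟩ := Subtype.ext (by simp [mul_assoc])
  rw [h3, h2, map_mul, map_mul, hψ]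
  rw [← hc_def]
  field_simp

theorem wChar_continuousOn (hab : ∀ x ∈ D, ∀ y ∈ D, x * y = y * x)
    (hc : ∀ d ∈ D, u * d * v ∈ D) (huv : u * v ∈ D) (hvu : v * u ∈ D) :
    ContinuousOn (wChar D u v hab hc huv hvu)
      {φ : characterSpace ℂ D | φ (⟨u * v, huv⟩ : D) ≠ 0} := by
  set s := {φ : characterSpace ℂ D | φ (⟨u * v, huv⟩ : D) ≠ 0}
  rw [IsInducing.subtypeVal.continuousOn_iff]
  rw [continuousOn_iff_continuous_restrict]
  apply WeakDual.continuous_of_continuous_eval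
  intro d
  have hev : ∀ x : D, Continuous fun φ : s => ((φ : characterSpace ℂ D) x : ℂ) := fun x =>
    (WeakDual.eval_continuous x).comp (continuous_subtype_val.comp continuous_subtype_val)
  have heq : (fun φ : s => (((wChar D u v hab hc huv hvu (φ : characterSpace ℂ D)) :
        WeakDual ℂ D)) d)
      = fun φ : s => ((φ : characterSpace ℂ D) (⟨u * v, huv⟩ : D))⁻¹ *
          (φ : characterSpace ℂ D) (⟨u * (d : A) * v, hc _ d.2⟩ : D) :=
    funext fun φ => wChar_apply D u v hab hc huv hvu (φ : characterSpace ℂ D) φ.2 d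
  exact heq ▸ ((hev _).inv₀ fun φ => φ.2).mul (hev _)

end WeylAux

theorem statement_2
    (D : NonUnitalStarSubalgebra ℂ A) (hDclosed : IsClosed (D : Set A))
    (hDabelian : ∀ x ∈ D, ∀ y ∈ D, x * y = y * x)
    (hDapprox : HasApproxUnit (D : Set A))
    (n : A) (hn : IsNormalizer D n) :
    ∃ α : PartialHomeomorph (characterSpace ℂ D) (characterSpace ℂ D),
      IsWeylHomeo D n α ∧
      ∀ β : PartialHomeomorph (characterSpace ℂ D) (characterSpace ℂ D),
        IsWeylHomeo D n β → Set.EqOn ⇑β ⇑α α.source := by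
  have hc : ∀ d ∈ D, star n * d * n ∈ D := fun d hd => (hn d hd).2
  have hc' : ∀ d ∈ D, n * d * star n ∈ D := fun d hd => (hn d hd).1
  have huv : star n * n ∈ D := WeylAux.mul_mem_of_approx D hDclosed hDapprox hc
  have hvu : n * star n ∈ D := WeylAux.mul_mem_of_approx D hDclosed hDapprox hc'
  set f := WeylAux.wChar D (star n) n hDabelian hc huv hvu with hf
  set g := WeylAux.wChar D n (star n) hDabelian hc' hvu huv with hg
  have hsrc : suppo D (star n * n)
      = {φ : characterSpace ℂ D | φ (⟨star n * n, huv⟩ : D) ≠ 0} :=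
    Set.ext fun φ => WeylAux.mem_suppo_iff D huv
  have htgt : suppo D (n * star n)
      = {φ : characterSpace ℂ D | φ (⟨n * star n, hvu⟩ : D) ≠ 0} :=
    Set.ext fun φ => WeylAux.mem_suppo_iff D hvu
  set α : PartialHomeomorph (characterSpace ℂ D) (characterSpace ℂ D) :=
    { toFun := f
      invFun := g
      source := suppo D (star n * n)
      target := suppo D (n * star n)
      map_source' := by
        intro φ hφ
        have hφ0 : φ (⟨star n * n, huv⟩ : D) ≠ 0 := (WeylAux.mem_suppo_iff D huv).1 hφ
        refine (WeylAux.mem_suppo_iff D hvu).2 ?_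
        rw [hf, WeylAux.wChar_vu D (star n) n hDabelian hc huv hvu φ hφ0]
        exact hφ0
      map_target' := by
        intro φ hφ
        have hφ0 : φ (⟨n * star n, hvu⟩ : D) ≠ 0 := (WeylAux.mem_suppo_iff D hvu).1 hφ
        refine (WeylAux.mem_suppo_iff D huv).2 ?_
        rw [hg, WeylAux.wChar_vu D n (star n) hDabelian hc' hvu huv φ hφ0]
        exact hφ0
      left_inv' := by
        intro φ hφ
        exact WeylAux.wChar_inv D (star n) n hDabelian hc hc' huv hvu φ
          ((WeylAux.mem_suppo_iff D huv).1 hφ)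
      right_inv' := by
        intro φ hφ
        exact WeylAux.wChar_inv D n (star n) hDabelian hc' hc hvu huv φ
          ((WeylAux.mem_suppo_iff D hvu).1 hφ)
      continuousOn_toFun := by
        show ContinuousOn f (suppo D (star n * n))
        rw [hsrc]
        exact WeylAux.wChar_continuousOn D (star n) n hDabelian hc huv hvu
      continuousOn_invFun := by
        show ContinuousOn g (suppo D (n * star n))
        rw [htgt]
        exact WeylAux.wChar_continuousOn D n (star n) hDabelian hc' hvu huv } with hα_def
  have hα : IsWeylHomeo D n α := by
    refine ⟨rfl, rfl, fun φ hφ d hd => ?_⟩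
    have hφ0 : φ (⟨star n * n, huv⟩ : D) ≠ 0 := (WeylAux.mem_suppo_iff D huv).1 hφ
    rw [WeylAux.evalD_of_mem D huv, WeylAux.evalD_of_mem D hd,
      WeylAux.evalD_of_mem D (hc d hd)]
    have h5 : (α φ : characterSpace ℂ D) = f φ := rfl
    rw [h5, hf, WeylAux.wChar_apply D (star n) n hDabelian hc huv hvu φ hφ0 ⟨d, hd⟩]
    field_simp
  refine ⟨α, hα, ?_⟩
  intro β hβ φ hφ
  have hφ0 : φ (⟨star n * n, huv⟩ : D) ≠ 0 := (WeylAux.mem_suppo_iff D huv).1 hφ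
  have hφβ : φ ∈ β.source := by rw [hβ.1]; exact hφ
  apply CharacterSpace.ext
  intro d
  have e1 := hβ.2.2 φ hφβ (d : A) d.2
  have e2 := hα.2.2 φ hφ (d : A) d.2
  have e3 := e1.trans e2.symm
  rw [WeylAux.evalD_of_mem D huv, WeylAux.evalD_of_mem D d.2,
    WeylAux.evalD_of_mem D d.2] at e3
  have h4 := mul_left_cancel₀ hφ0 e3
  exact h4
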